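/- arXiv:2409.03495 — 5 statements merged into one kernel-verified Lean document; each statement's English description precedes it below -/
import Mathlib

section
/- For every real r, every real α > 0, and every real q with 0 < q ≤ 2, one has (r² + α)^(q/2) ≤ |r|^q + α·(r² + α)^(q/2 − 1). -/
open Real

theorem smoothed_le_abs_rpow_add_gap (r α q : ℝ) (hα : 0 < α) (hq : 0 < q) (hq2 : q ≤ 2) :
    (r ^ 2 + α) ^ (q / 2) ≤ |r| ^ q + α * (r ^ 2 + α) ^ (q / 2 - 1) := by
  have hr2 : (0:ℝ) ≤ r ^ 2 := sq_nonneg r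
  have hs : 0 < r ^ 2 + α := by linarith
  have hsplit : (r ^ 2 + α) ^ (q / 2)
      = r ^ 2 * (r ^ 2 + α) ^ (q / 2 - 1) + α * (r ^ 2 + α) ^ (q / 2 - 1) := by
    rw [← add_mul]
    rw [← Real.rpow_one_add' (by positivity) (by intro h; linarith [h])]
    ring_nf
  rw [hsplit]
  apply add_le_add_left
  rcases eq_or_lt_of_le hr2 with h0 | h0
  · rw [← h0, zero_mul]
    positivity
  · have h1 : (r ^ 2 + α) ^ (q / 2 - 1) ≤ (r ^ 2) ^ (q / 2 - 1) :=
      Real.rpow_le_rpow_of_nonpos h0 (by linarith) (by linarith)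
    calc r ^ 2 * (r ^ 2 + α) ^ (q / 2 - 1) ≤ r ^ 2 * (r ^ 2) ^ (q / 2 - 1) := by
          exact mul_le_mul_of_nonneg_left h1 hr2
      _ = (r ^ 2) ^ (q / 2) := by
          rw [← Real.rpow_one_add' (le_of_lt h0) (by intro h; linarith [h])]
          ring_nf
      _ = |r| ^ q := by
          rw [← sq_abs, ← Real.rpow_natCast |r| 2, ← Real.rpow_mul (abs_nonneg r)]
          ring_nf
end

section
/- Let F be a real M×n matrix, W a symmetric positive definite real M×M matrix with FᵀWF invertible, S the positive semidefinite square root of W, C ∈ ℝ^M, and x ∈ ℝ^n. Set x⁺ = (FᵀWF)⁻¹·Fᵀ·W·C and P = I − S·F·(FᵀWF)⁻¹·Fᵀ·S. Then S·(C − F·x⁺) = P·(S·(C − F·x)), where matrices act on vectors by matrix-vector multiplication. -/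
open Matrix

theorem airls_residual_projection {M n : ℕ} (F : Matrix (Fin M) (Fin n) ℝ)
    (W S : Matrix (Fin M) (Fin M) ℝ) (hW : W.PosDef)
    (hinv : IsUnit (Fᵀ * W * F))
    (hS : S.PosSemidef) (hSS : S * S = W)
    (C : Fin M → ℝ) (x : Fin n → ℝ)
    (xplus : Fin n → ℝ) (hxplus : xplus = ((Fᵀ * W * F)⁻¹ * Fᵀ * W).mulVec C)
    (P : Matrix (Fin M) (Fin M) ℝ)
    (hP : P = (1 : Matrix (Fin M) (Fin M) ℝ) - S * F * (Fᵀ * W * F)⁻¹ * Fᵀ * S) :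
    S.mulVec (C - F.mulVec xplus) = P.mulVec (S.mulVec (C - F.mulVec x)) := by
  subst hxplus hP hSS
  have hdet := (Matrix.isUnit_iff_isUnit_det _).mp hinv
  have h1 : (Fᵀ * (S * S) * F)⁻¹ * (Fᵀ * (S * S) * F) = 1 :=
    Matrix.nonsing_inv_mul _ hdet
  have key : (1 - S * F * (Fᵀ * (S * S) * F)⁻¹ * Fᵀ * S) * (S * F) = 0 := by
    rw [Matrix.sub_mul, Matrix.one_mul]
    have h2 : S * F * (Fᵀ * (S * S) * F)⁻¹ * Fᵀ * S * (S * F)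
        = S * (F * ((Fᵀ * (S * S) * F)⁻¹ * (Fᵀ * (S * S) * F))) := by
      simp only [Matrix.mul_assoc]
    rw [h2, h1, Matrix.mul_one, sub_self]
  have key2 : (1 - S * F * (Fᵀ * (S * S) * F)⁻¹ * Fᵀ * S) * S
      = S - S * (F * ((Fᵀ * (S * S) * F)⁻¹ * Fᵀ * (S * S))) := by
    rw [Matrix.sub_mul, Matrix.one_mul]
    congr 1
    simp only [Matrix.mul_assoc]
  simp only [mulVec_sub, mulVec_mulVec]
  rw [key, key2, Matrix.sub_mulVec, Matrix.zero_mulVec, sub_zero]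
end

section
/- Let M, n be natural numbers, F a real M×n matrix, C ∈ ℝ^M, α > 0 a real number, q̄ > 0 a real number, and for each h ∈ Fin M let q_h be a real number with 0 < q_h ≤ q̄. For y ∈ ℝ^n write r_h(y) = (C − F·y)_h, and let W(x) be the M×M diagonal matrix with diagonal entries q_h·(r_h(x)² + α)^(q_h/q̄ − 1). Fix x ∈ ℝ^n such that Fᵀ·W(x)·F is invertible, and set x⁺ = (Fᵀ·W(x)·F)⁻¹·Fᵀ·W(x)·C. Then Σ_h (r_h(x⁺)² + α)^(q_h/q̄) ≤ Σ_h (r_h(x)² + α)^(q_h/q̄). -/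
open Matrix Real Finset

lemma airls_concave_ineq {a b p : ℝ} (ha : 0 < a) (hb : 0 < b) (hp0 : 0 < p) (hp1 : p ≤ 1) :
    b ^ p ≤ a ^ p + p * a ^ (p - 1) * (b - a) := by
  have hs : (-1 : ℝ) ≤ b / a - 1 := by
    have : 0 < b / a := div_pos hb ha
    linarith
  have key := rpow_one_add_le_one_add_mul_self hs hp0.le hp1
  have h1 : (1 + (b / a - 1)) = b / a := by ring
  rw [h1] at key
  have hap : 0 < a ^ p := rpow_pos_of_pos ha p
  have h2 : (b / a) ^ p = b ^ p / a ^ p := div_rpow hb.le ha.le p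
  rw [h2] at key
  have h3 := mul_le_mul_of_nonneg_left key hap.le
  rw [mul_div_cancel₀ _ (ne_of_gt hap)] at h3
  have h4 : a ^ (p - 1) = a ^ p / a := by
    rw [rpow_sub ha, rpow_one]
  calc b ^ p ≤ a ^ p * (1 + p * (b / a - 1)) := h3
    _ = a ^ p + p * (a ^ p / a) * (b - a) := by field_simp
    _ = a ^ p + p * a ^ (p - 1) * (b - a) := by rw [h4]

theorem airls_single_block_descent (M n : ℕ) (F : Matrix (Fin M) (Fin n) ℝ)
    (C : Fin M → ℝ) (α qbar : ℝ) (hα : 0 < α) (hqbar : 0 < qbar)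
    (q : Fin M → ℝ) (hq : ∀ h, 0 < q h) (hqle : ∀ h, q h ≤ qbar)
    (r : (Fin n → ℝ) → Fin M → ℝ) (hr : ∀ y, r y = C - F.mulVec y)
    (Wt : (Fin n → ℝ) → Matrix (Fin M) (Fin M) ℝ)
    (hW : ∀ y, Wt y = Matrix.diagonal (fun h => q h * ((r y h) ^ 2 + α) ^ (q h / qbar - 1)))
    (x : Fin n → ℝ) (hinv : IsUnit (Fᵀ * Wt x * F))
    (xplus : Fin n → ℝ) (hxplus : xplus = ((Fᵀ * Wt x * F)⁻¹ * Fᵀ * Wt x).mulVec C) :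
    ∑ h : Fin M, ((r xplus h) ^ 2 + α) ^ (q h / qbar) ≤
      ∑ h : Fin M, ((r x h) ^ 2 + α) ^ (q h / qbar) := by
  set w : Fin M → ℝ := fun h => q h * ((r x h) ^ 2 + α) ^ (q h / qbar - 1) with hwdef
  have hwpos : ∀ h, 0 < w h := fun h =>
    mul_pos (hq h) (rpow_pos_of_pos (by positivity) _)
  -- Normal equations
  have hA : (Fᵀ * Wt x * F).mulVec xplus = (Fᵀ * Wt x).mulVec C := by
    rw [hxplus, Matrix.mulVec_mulVec]
    rw [show (Fᵀ * Wt x * F)⁻¹ * Fᵀ * Wt x = (Fᵀ * Wt x * F)⁻¹ * (Fᵀ * Wt x) by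
      rw [Matrix.mul_assoc], ← Matrix.mul_assoc,
      Matrix.mul_nonsing_inv _ ((Matrix.isUnit_iff_isUnit_det _).mp hinv), Matrix.one_mul]
  have horthv : (Fᵀ * Wt x).mulVec (r xplus) = 0 := by
    rw [hr, Matrix.mulVec_sub]
    have : (Fᵀ * Wt x).mulVec (F.mulVec xplus) = (Fᵀ * Wt x * F).mulVec xplus := by
      rw [Matrix.mulVec_mulVec]
    rw [this, hA, sub_self]
  have horth : ∀ j, ∑ h, F h j * (w h * r xplus h) = 0 := by
    intro j
    have := congrFun horthv j
    rw [hW x] at this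
    have this2 : ∑ h, F h j * (q h * ((r x h ^ 2 + α) ^ (q h / qbar - 1) * r xplus h)) = 0 := by
      simpa [Matrix.mulVec, dotProduct, Matrix.mul_apply, Matrix.diagonal,
        Matrix.transpose_apply, Finset.sum_ite_eq, mul_assoc] using this
    rw [← this2]
    apply Finset.sum_congr rfl; intro h _
    simp only [hwdef]; ring
  -- weighted least squares descent
  have hQ : ∑ h, w h * (r xplus h) ^ 2 ≤ ∑ h, w h * (r x h) ^ 2 := by
    set d : Fin n → ℝ := fun j => x j - xplus j with hddef
    have hrx : ∀ h, r x h = r xplus h - (F.mulVec d) h := by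
      intro h
      have : F.mulVec d = F.mulVec x - F.mulVec xplus := by
        rw [show d = x - xplus from rfl, Matrix.mulVec_sub]
      rw [hr, hr, this]
      simp
    have hcross : ∑ h, w h * r xplus h * (F.mulVec d) h = 0 := by
      have : ∑ h, w h * r xplus h * (F.mulVec d) h
          = ∑ j, d j * ∑ h, F h j * (w h * r xplus h) := by
        simp only [Matrix.mulVec, dotProduct, Finset.mul_sum, Finset.sum_mul]
        rw [Finset.sum_comm]
        apply Finset.sum_congr rfl; intro j _
        apply Finset.sum_congr rfl; intro h _
        ring
      rw [this]
      simp [horth]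
    have hexp : ∑ h, w h * (r x h) ^ 2
        = ∑ h, w h * (r xplus h) ^ 2 - 2 * ∑ h, w h * r xplus h * (F.mulVec d) h
          + ∑ h, w h * ((F.mulVec d) h) ^ 2 := by
      rw [Finset.mul_sum, ← Finset.sum_sub_distrib, ← Finset.sum_add_distrib]
      apply Finset.sum_congr rfl; intro h _
      rw [hrx h]; ring
    have hnn : 0 ≤ ∑ h, w h * ((F.mulVec d) h) ^ 2 :=
      Finset.sum_nonneg fun h _ => mul_nonneg (hwpos h).le (sq_nonneg _)
    rw [hexp, hcross]
    linarith
  -- combine via concavity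
  have hstep : ∀ h : Fin M, ((r xplus h) ^ 2 + α) ^ (q h / qbar)
      ≤ ((r x h) ^ 2 + α) ^ (q h / qbar)
        + (w h / qbar) * ((r xplus h) ^ 2 - (r x h) ^ 2) := by
    intro h
    have hp0 : 0 < q h / qbar := div_pos (hq h) hqbar
    have hp1 : q h / qbar ≤ 1 := (div_le_one hqbar).mpr (hqle h)
    have ha : (0:ℝ) < (r x h) ^ 2 + α := by positivity
    have hb : (0:ℝ) < (r xplus h) ^ 2 + α := by positivity
    have := airls_concave_ineq ha hb hp0 hp1
    have hwq : (q h / qbar) * ((r x h) ^ 2 + α) ^ (q h / qbar - 1) = w h / qbar := by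
      rw [hwdef]; ring
    calc ((r xplus h) ^ 2 + α) ^ (q h / qbar)
        ≤ ((r x h) ^ 2 + α) ^ (q h / qbar)
          + (q h / qbar) * ((r x h) ^ 2 + α) ^ (q h / qbar - 1)
            * (((r xplus h) ^ 2 + α) - ((r x h) ^ 2 + α)) := this
      _ = ((r x h) ^ 2 + α) ^ (q h / qbar)
          + (w h / qbar) * ((r xplus h) ^ 2 - (r x h) ^ 2) := by rw [hwq]; ring
  calc ∑ h : Fin M, ((r xplus h) ^ 2 + α) ^ (q h / qbar)
      ≤ ∑ h : Fin M, (((r x h) ^ 2 + α) ^ (q h / qbar)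
          + (w h / qbar) * ((r xplus h) ^ 2 - (r x h) ^ 2)) :=
        Finset.sum_le_sum fun h _ => hstep h
    _ = ∑ h : Fin M, ((r x h) ^ 2 + α) ^ (q h / qbar)
          + (1 / qbar) * (∑ h, w h * (r xplus h) ^ 2 - ∑ h, w h * (r x h) ^ 2) := by
        rw [Finset.sum_add_distrib, ← Finset.sum_sub_distrib, Finset.mul_sum]
        congr 1
        apply Finset.sum_congr rfl; intro h _
        ring
    _ ≤ ∑ h : Fin M, ((r x h) ^ 2 + α) ^ (q h / qbar) := by
        have : (1 / qbar) * (∑ h, w h * (r xplus h) ^ 2 - ∑ h, w h * (r x h) ^ 2) ≤ 0 :=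
          mul_nonpos_of_nonneg_of_nonpos (by positivity) (by linarith)
        linarith
end

section
/- In the setting of the single-block AIRLS update — F a real M×n matrix, C ∈ ℝ^M, α > 0, q̄ > 0, real exponents with 0 < q_h < q̄ for all h ∈ Fin M, residuals r_h(y) = (C − F·y)_h, weights W(x) diagonal with entries q_h·(r_h(x)² + α)^(q_h/q̄ − 1), Fᵀ·W(x)·F invertible, and x⁺ = (Fᵀ·W(x)·F)⁻¹·Fᵀ·W(x)·C — if Σ_h (r_h(x⁺)² + α)^(q_h/q̄) = Σ_h (r_h(x)² + α)^(q_h/q̄), then r_h(x⁺)² = r_h(x)² for every h ∈ Fin M. -/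
open Matrix Real Finset

lemma tangent_rpow_lt {u v θ : ℝ} (hu : 0 < u) (hv : 0 < v) (hθ1 : 0 < θ)
    (hθ2 : θ < 1) (hne : v ≠ u) :
    v ^ θ < u ^ θ + θ * u ^ (θ - 1) * (v - u) := by
  have hs : (-1 : ℝ) ≤ v / u - 1 := by
    have : 0 < v / u := div_pos hv hu
    linarith
  have hs' : v / u - 1 ≠ 0 := by
    intro h
    apply hne
    field_simp at h
    linarith
  have hb := rpow_one_add_lt_one_add_mul_self hs hs' hθ1 hθ2
  rw [add_sub_cancel] at hb
  have hmul := mul_lt_mul_of_pos_left hb (rpow_pos_of_pos hu θ)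
  have h1 : u ^ θ * (v / u) ^ θ = v ^ θ := by
    rw [Real.div_rpow hv.le hu.le, mul_div_cancel₀]
    exact (rpow_pos_of_pos hu θ).ne'
  have h2 : u ^ (θ - 1) = u ^ θ / u := by
    rw [Real.rpow_sub hu, Real.rpow_one]
  rw [h1] at hmul
  calc v ^ θ < u ^ θ * (1 + θ * (v / u - 1)) := hmul
    _ = u ^ θ + θ * (u ^ θ / u) * (v - u) := by field_simp
    _ = u ^ θ + θ * u ^ (θ - 1) * (v - u) := by rw [h2]

theorem airls_descent_equality_case (M n : ℕ) (F : Matrix (Fin M) (Fin n) ℝ)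
    (C : Fin M → ℝ) (α qbar : ℝ) (hα : 0 < α) (hqbar : 0 < qbar)
    (q : Fin M → ℝ) (hq : ∀ h, 0 < q h) (hqlt : ∀ h, q h < qbar)
    (r : (Fin n → ℝ) → Fin M → ℝ) (hr : ∀ y, r y = C - F.mulVec y)
    (Wt : (Fin n → ℝ) → Matrix (Fin M) (Fin M) ℝ)
    (hW : ∀ y, Wt y = Matrix.diagonal (fun h => q h * ((r y h) ^ 2 + α) ^ (q h / qbar - 1)))
    (x : Fin n → ℝ) (hinv : IsUnit (Fᵀ * Wt x * F))
    (xplus : Fin n → ℝ) (hxplus : xplus = ((Fᵀ * Wt x * F)⁻¹ * Fᵀ * Wt x).mulVec C)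
    (heq : ∑ h : Fin M, ((r xplus h) ^ 2 + α) ^ (q h / qbar) =
      ∑ h : Fin M, ((r x h) ^ 2 + α) ^ (q h / qbar)) :
    ∀ h : Fin M, (r xplus h) ^ 2 = (r x h) ^ 2 := by
  set w : Fin M → ℝ := fun h => q h * ((r x h) ^ 2 + α) ^ (q h / qbar - 1) with hwdef
  have hwpos : ∀ h, 0 < w h := fun h =>
    mul_pos (hq h) (rpow_pos_of_pos (by positivity) _)
  -- normal equation
  have hdet : IsUnit (Fᵀ * Wt x * F).det := (Matrix.isUnit_iff_isUnit_det _).mp hinv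
  have hnorm : (Fᵀ * Wt x * F).mulVec xplus = (Fᵀ * Wt x).mulVec C := by
    rw [hxplus, Matrix.mulVec_mulVec, Matrix.mul_assoc ((Fᵀ * Wt x * F)⁻¹) Fᵀ (Wt x),
      ← Matrix.mul_assoc (Fᵀ * Wt x * F) ((Fᵀ * Wt x * F)⁻¹) (Fᵀ * Wt x), Matrix.mul_nonsing_inv _ hdet, Matrix.one_mul]
  -- orthogonality: Fᵀ W r(xplus) = 0
  have horth : (Fᵀ * Wt x).mulVec (r xplus) = 0 := by
    rw [hr, Matrix.mulVec_sub, Matrix.mulVec_mulVec, hnorm, sub_self]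
  set d : Fin n → ℝ := x - xplus with hddef
  have hrx : ∀ h, r x h = r xplus h - F.mulVec d h := by
    intro h
    simp [hr, hddef, Matrix.mulVec_sub]
  -- cross term is zero
  have hWr : ∀ h, (Wt x).mulVec (r xplus) h = w h * r xplus h := by
    intro h
    rw [hW]
    simp [Matrix.mulVec_diagonal]
    exact Or.inl rfl
  have hcross : ∑ h, w h * r xplus h * F.mulVec d h = 0 := by
    have : ∑ h, w h * r xplus h * F.mulVec d h
        = (Wt x).mulVec (r xplus) ⬝ᵥ F.mulVec d := by
      simp [dotProduct, hWr]
    rw [this, Matrix.dotProduct_mulVec, ← Matrix.mulVec_transpose,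
      Matrix.mulVec_mulVec, horth]
    simp
  -- descent inequality
  have hdesc : ∑ h, w h * (r xplus h) ^ 2 ≤ ∑ h, w h * (r x h) ^ 2 := by
    have expand : ∀ h, w h * (r x h) ^ 2 =
        w h * (r xplus h) ^ 2 - 2 * (w h * r xplus h * F.mulVec d h)
          + w h * (F.mulVec d h) ^ 2 := by
      intro h
      rw [hrx h]
      ring
    have : ∑ h, w h * (r x h) ^ 2 = ∑ h, w h * (r xplus h) ^ 2
        - 2 * ∑ h, w h * r xplus h * F.mulVec d h + ∑ h, w h * (F.mulVec d h) ^ 2 := by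
      simp only [expand]
      rw [Finset.sum_add_distrib, Finset.sum_sub_distrib, Finset.mul_sum]
    rw [this, hcross]
    have : 0 ≤ ∑ h, w h * (F.mulVec d h) ^ 2 :=
      Finset.sum_nonneg fun h _ => mul_nonneg (hwpos h).le (sq_nonneg _)
    linarith
  -- now the equality case
  intro h0
  by_contra hne0
  set u : Fin M → ℝ := fun h => (r x h) ^ 2 + α with hudef
  set v : Fin M → ℝ := fun h => (r xplus h) ^ 2 + α with hvdef
  have hupos : ∀ h, 0 < u h := fun h => by positivity
  have hvpos : ∀ h, 0 < v h := fun h => by positivity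
  have hθ1 : ∀ h, 0 < q h / qbar := fun h => div_pos (hq h) hqbar
  have hθ2 : ∀ h, q h / qbar < 1 := fun h => (div_lt_one hqbar).mpr (hqlt h)
  have htang : ∀ h ∈ Finset.univ, v h ^ (q h / qbar) ≤
      u h ^ (q h / qbar) + (q h / qbar) * u h ^ (q h / qbar - 1) * (v h - u h) := by
    intro h _
    rcases eq_or_ne (v h) (u h) with heq' | hne'
    · rw [heq']; simp
    · exact (tangent_rpow_lt (hupos h) (hvpos h) (hθ1 h) (hθ2 h) hne').le
  have hstrict : v h0 ^ (q h0 / qbar) <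
      u h0 ^ (q h0 / qbar) + (q h0 / qbar) * u h0 ^ (q h0 / qbar - 1) * (v h0 - u h0) := by
    apply tangent_rpow_lt (hupos h0) (hvpos h0) (hθ1 h0) (hθ2 h0)
    intro hc
    apply hne0
    have := hc
    simp only [hvdef, hudef] at this
    linarith
  have hsum_lt : ∑ h, v h ^ (q h / qbar) <
      ∑ h, (u h ^ (q h / qbar) + (q h / qbar) * u h ^ (q h / qbar - 1) * (v h - u h)) :=
    Finset.sum_lt_sum htang ⟨h0, Finset.mem_univ h0, hstrict⟩
  have hkey : ∑ h, (q h / qbar) * u h ^ (q h / qbar - 1) * (v h - u h) ≤ 0 := by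
    have : ∀ h, (q h / qbar) * u h ^ (q h / qbar - 1) * (v h - u h)
        = (1 / qbar) * (w h * (r xplus h) ^ 2 - w h * (r x h) ^ 2) := by
      intro h
      simp only [hwdef, hudef, hvdef]
      field_simp
      ring
    simp only [this]
    rw [← Finset.mul_sum, Finset.sum_sub_distrib]
    apply mul_nonpos_of_nonneg_of_nonpos
    · positivity
    · linarith
  rw [Finset.sum_add_distrib] at hsum_lt
  have : ∑ h, v h ^ (q h / qbar) < ∑ h, u h ^ (q h / qbar) := by linarith
  simp only [hudef, hvdef] at this
  exact absurd heq (ne_of_lt this)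
end

section
/- Let M, n be natural numbers, F a real M×n matrix, C ∈ ℝ^M, α > 0 a real number, q̄ > 0 a real number, and for each h ∈ Fin M let q_h be a real number with 0 < q_h ≤ q̄. For y ∈ ℝ^n write r_h(y) = (C − F·y)_h, let W(y) be the M×M diagonal matrix with diagonal entries q_h·(r_h(y)² + α)^(q_h/q̄ − 1), and define Ĝ(y) = Σ_h (r_h(y)² + α)^(q_h/q̄). Suppose x̂ ∈ ℝ^n satisfies Fᵀ·W(x̂)·F invertible and x̂ = (Fᵀ·W(x̂)·F)⁻¹·Fᵀ·W(x̂)·C. Then the Fréchet derivative of Ĝ at x̂ is zero. -/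
open Matrix Real Finset

theorem airls_fixed_point_is_critical (M n : ℕ) (F : Matrix (Fin M) (Fin n) ℝ)
    (C : Fin M → ℝ) (α qbar : ℝ) (hα : 0 < α) (hqbar : 0 < qbar)
    (q : Fin M → ℝ) (hq : ∀ h, 0 < q h) (hqle : ∀ h, q h ≤ qbar)
    (r : (Fin n → ℝ) → Fin M → ℝ) (hr : ∀ y, r y = C - F.mulVec y)
    (Wt : (Fin n → ℝ) → Matrix (Fin M) (Fin M) ℝ)
    (hW : ∀ y, Wt y = Matrix.diagonal (fun h => q h * ((r y h) ^ 2 + α) ^ (q h / qbar - 1)))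
    (Ghat : (Fin n → ℝ) → ℝ)
    (hGhat : ∀ y, Ghat y = ∑ h : Fin M, ((r y h) ^ 2 + α) ^ (q h / qbar))
    (xhat : Fin n → ℝ) (hinv : IsUnit (Fᵀ * Wt xhat * F))
    (hfix : xhat = ((Fᵀ * Wt xhat * F)⁻¹ * Fᵀ * Wt xhat).mulVec C) :
    fderiv ℝ Ghat xhat = 0 := by
  have hs : ∀ h : Fin M, (0:ℝ) < (r xhat h) ^ 2 + α := fun h => by positivity
  have hrx : ∀ h : Fin M, r xhat h = C h - F.mulVec xhat h := by
    intro h; rw [hr]; rfl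
  -- continuous linear maps L h : y ↦ (F.mulVec y) h
  set L : Fin M → (Fin n → ℝ) →L[ℝ] ℝ := fun h =>
    LinearMap.toContinuousLinearMap ((LinearMap.proj h).comp F.mulVecLin) with hL
  have hLapp : ∀ (h : Fin M) (v : Fin n → ℝ), L h v = F.mulVec v h := fun h v => rfl
  -- derivative of each summand
  have hterm : ∀ h : Fin M,
      HasFDerivAt (fun y : Fin n → ℝ => ((C h - F.mulVec y h) ^ 2 + α) ^ (q h / qbar))
        ((q h / qbar * ((r xhat h) ^ 2 + α) ^ (q h / qbar - 1) * (2 * r xhat h)) • (-(L h)))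
        xhat := by
    intro h
    rw [hrx h]
    have hlin : HasFDerivAt (fun y : Fin n → ℝ => F.mulVec y h) (L h) xhat :=
      (L h).hasFDerivAt
    have hinner : HasFDerivAt (fun y : Fin n → ℝ => C h - F.mulVec y h) (-(L h)) xhat := by
      simpa using (hasFDerivAt_const (C h) xhat).fun_sub hlin
    have hsq : HasFDerivAt (fun y : Fin n → ℝ => (C h - F.mulVec y h) ^ 2 + α)
        ((2 * (C h - F.mulVec xhat h)) • (-(L h))) xhat := by
      have h2 := (hinner.mul hinner).add_const α
      have hfun : (fun y : Fin n → ℝ => (C h - F.mulVec y h) ^ 2 + α)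
          = fun y : Fin n → ℝ => (C h - F.mulVec y h) * (C h - F.mulVec y h) + α := by
        funext y; ring
      rw [hfun, two_mul, add_smul]
      exact h2
    have hpos : (0:ℝ) < (C h - F.mulVec xhat h) ^ 2 + α := by positivity
    have hpow : HasDerivAt (fun t : ℝ => t ^ (q h / qbar))
        (q h / qbar * ((C h - F.mulVec xhat h) ^ 2 + α) ^ (q h / qbar - 1))
        ((C h - F.mulVec xhat h) ^ 2 + α) :=
      Real.hasDerivAt_rpow_const (Or.inl hpos.ne')
    have := hpow.comp_hasFDerivAt xhat hsq
    simpa [smul_smul, mul_assoc, Function.comp_def] using this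
  have hsum : HasFDerivAt Ghat
      (∑ h : Fin M,
        (q h / qbar * ((r xhat h) ^ 2 + α) ^ (q h / qbar - 1) * (2 * r xhat h)) • (-(L h)))
      xhat := by
    have := HasFDerivAt.fun_sum (fun h (_ : h ∈ Finset.univ) => hterm h)
    have hfun : Ghat = fun y : Fin n → ℝ =>
        ∑ h : Fin M, ((C h - F.mulVec y h) ^ 2 + α) ^ (q h / qbar) := by
      funext y
      rw [hGhat]
      refine Finset.sum_congr rfl fun h _ => ?_
      rw [hr]; rfl
    rw [hfun]
    exact this
  rw [hsum.fderiv]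
  -- derive the normal equations
  set W := Wt xhat with hWx
  have hA : (Fᵀ * W * F) * (Fᵀ * W * F)⁻¹ = 1 :=
    Matrix.mul_nonsing_inv _ ((Matrix.isUnit_iff_isUnit_det _).mp hinv)
  have hkey0 : (Fᵀ * W).mulVec (F.mulVec xhat) = (Fᵀ * W).mulVec C := by
    rw [Matrix.mulVec_mulVec]
    conv_lhs => rw [hfix]
    rw [Matrix.mulVec_mulVec, ← Matrix.mul_assoc, ← Matrix.mul_assoc, hA, Matrix.one_mul]
  have hkey : ∀ j : Fin n,
      ∑ h : Fin M, F h j * (q h * ((r xhat h) ^ 2 + α) ^ (q h / qbar - 1)) * r xhat h = 0 := by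
    intro j
    have h0 : (Fᵀ * W).mulVec (r xhat) = 0 := by
      rw [hr, Matrix.mulVec_sub, hkey0, sub_self]
    have h1 := congrFun h0 j
    rw [hWx, hW] at h1
    simpa [Matrix.mulVec, dotProduct, Matrix.mul_apply, Matrix.diagonal, Matrix.transpose_apply,
      Finset.sum_ite_eq, mul_assoc] using h1
  -- conclude: the sum of derivatives vanishes
  ext v
  simp only [ContinuousLinearMap.coe_sum', Finset.sum_apply, ContinuousLinearMap.coe_smul',
    Pi.smul_apply, ContinuousLinearMap.neg_apply, smul_eq_mul, ContinuousLinearMap.zero_apply,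
    hLapp]
  have expand : ∀ h : Fin M, F.mulVec v h = ∑ j : Fin n, F h j * v j := by
    intro h; simp [Matrix.mulVec, dotProduct]
  have step : ∀ (h : Fin M) (j : Fin n),
      q h / qbar * ((r xhat h) ^ 2 + α) ^ (q h / qbar - 1) * (2 * r xhat h) * -(F h j * v j)
        = (-2 / qbar * v j) *
            (F h j * (q h * ((r xhat h) ^ 2 + α) ^ (q h / qbar - 1)) * r xhat h) := by
    intro h j; ring
  calc (∑ h : Fin M,
        q h / qbar * ((r xhat h) ^ 2 + α) ^ (q h / qbar - 1) * (2 * r xhat h) * -(F.mulVec v h))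
      = ∑ h : Fin M, ∑ j : Fin n, (-2 / qbar * v j) *
          (F h j * (q h * ((r xhat h) ^ 2 + α) ^ (q h / qbar - 1)) * r xhat h) := by
        refine Finset.sum_congr rfl fun h _ => ?_
        rw [expand h, ← Finset.sum_neg_distrib, Finset.mul_sum]
        exact Finset.sum_congr rfl fun j _ => step h j
    _ = ∑ j : Fin n, (-2 / qbar * v j) *
          ∑ h : Fin M, F h j * (q h * ((r xhat h) ^ 2 + α) ^ (q h / qbar - 1)) * r xhat h := by
        rw [Finset.sum_comm]
        exact Finset.sum_congr rfl fun j _ => (Finset.mul_sum _ _ _).symm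
    _ = 0 := by simp [hkey]
end
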